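/- arXiv:2403.06732 — 4 statements merged into one kernel-verified Lean document; each statement's English description precedes it below -/
import Mathlib

section
/- Let n, k, r, p be natural numbers with r ≤ min(n,k) and p ≥ r, and set ℓ = min(n,k). Let V ∈ ℝ^{n×r}, W ∈ ℝ^{n×p}, and h : ℝ^r → ℝ^p be any map, and let M = { V z + W h(z) : z ∈ ℝ^r } ⊆ ℝ^n. Let S ∈ ℝ^{n×k} be a matrix with columns x^(1), …, x^(k) and singular values σ_1 ≥ σ_2 ≥ … ≥ σ_ℓ ≥ 0. Then the total squared approximation error of the columns of S on M is bounded below by the tail of squared singular values: Σ_{i=1}^{k} inf_{x̂ ∈ M} ‖x̂ − x^(i)‖₂² ≥ Σ_{i=p+r+1}^{ℓ} σ_i². -/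
open Finset
open RealInnerProductSpace

section aux

variable {F : Type*} [NormedAddCommGroup F] [InnerProductSpace ℝ F]

lemma aux_sum_apply {n : ℕ} {ι : Type*} [DecidableEq ι] (s : Finset ι)
    (w : ι → EuclideanSpace ℝ (Fin n)) (c : ι → ℝ) (a : Fin n) :
    (∑ q ∈ s, c q • w q) a = ∑ q ∈ s, c q * w q a := by
  induction s using Finset.induction with
  | empty => simp
  | insert a s h ih => simp_all [Finset.sum_insert h]

lemma aux_norm_sq_combo {k ℓ : ℕ} (σ : Fin ℓ → ℝ) (v : Fin ℓ → Fin k → ℝ)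
    (hv : ∀ i j, ∑ y, v i y * v j y = if i = j then (1:ℝ) else 0)
    (w : Fin ℓ → F) :
    ∑ i : Fin k, ‖∑ q, (σ q * v q i) • w q‖^2 = ∑ q, σ q ^2 * ‖w q‖^2 := by
  have h1 : ∀ i : Fin k, ‖∑ q, (σ q * v q i) • w q‖^2
      = ∑ q, ∑ q', (σ q * v q i) * ((σ q' * v q' i) * ⟪w q, w q'⟫) := by
    intro i
    rw [← real_inner_self_eq_norm_sq, sum_inner]
    refine Finset.sum_congr rfl fun q _ => ?_
    rw [real_inner_smul_left, inner_sum, Finset.mul_sum]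
    refine Finset.sum_congr rfl fun q' _ => ?_
    rw [real_inner_smul_right]
  calc ∑ i : Fin k, ‖∑ q, (σ q * v q i) • w q‖^2
      = ∑ q, ∑ q', (σ q * σ q' * ⟪w q, w q'⟫) * ∑ i, v q i * v q' i := by
        simp_rw [h1]
        rw [Finset.sum_comm]
        refine Finset.sum_congr rfl fun q _ => ?_
        rw [Finset.sum_comm]
        refine Finset.sum_congr rfl fun q' _ => ?_
        rw [Finset.mul_sum]
        exact Finset.sum_congr rfl fun i _ => by ring
    _ = ∑ q, σ q ^2 * ‖w q‖^2 := by
        refine Finset.sum_congr rfl fun q _ => ?_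
        simp_rw [hv, mul_ite, mul_one, mul_zero]
        rw [Finset.sum_ite_eq univ q, if_pos (mem_univ q),
          real_inner_self_eq_norm_sq]
        ring

lemma aux_norm_sq_sum_smul {ι : Type*} [Fintype ι] [DecidableEq ι]
    {e : ι → F} (he : Orthonormal ℝ e) (c : ι → ℝ) :
    ‖∑ j, c j • e j‖^2 = ∑ j, (c j)^2 := by
  rw [← real_inner_self_eq_norm_sq, sum_inner]
  refine Finset.sum_congr rfl fun j _ => ?_
  rw [real_inner_smul_left, inner_sum]
  simp_rw [real_inner_smul_right, orthonormal_iff_ite.mp he, mul_ite, mul_one, mul_zero]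
  rw [Finset.sum_ite_eq univ j, if_pos (mem_univ j)]
  ring

lemma aux_rearrange (ℓ d : ℕ) (σ t : Fin ℓ → ℝ)
    (hσdec : ∀ i j : Fin ℓ, i ≤ j → σ j ≤ σ i) (hσ0 : ∀ i, 0 ≤ σ i)
    (ht0 : ∀ i, 0 ≤ t i) (ht1 : ∀ i, t i ≤ 1) (hts : ∑ i, t i ≤ (d:ℝ)) :
    ∑ i ∈ univ.filter (fun i : Fin ℓ => d ≤ (i:ℕ)), σ i ^2
      ≤ ∑ i, σ i ^2 * (1 - t i) := by
  by_cases hd : ℓ ≤ d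
  · have hempty : univ.filter (fun i : Fin ℓ => d ≤ (i:ℕ)) = ∅ := by
      refine Finset.filter_false_of_mem fun i _ => ?_
      have := i.isLt; omega
    rw [hempty, Finset.sum_empty]
    exact Finset.sum_nonneg fun i _ => mul_nonneg (sq_nonneg _) (by linarith [ht1 i])
  · push_neg at hd
    set A := univ.filter (fun i : Fin ℓ => ¬ d ≤ (i:ℕ)) with hA
    set B := univ.filter (fun i : Fin ℓ => d ≤ (i:ℕ)) with hB
    set c := σ ⟨d, hd⟩ ^ 2 with hc
    have hcnn : 0 ≤ c := sq_nonneg _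
    have hcard : A.card = d := by
      have : A = Finset.Iio (⟨d, hd⟩ : Fin ℓ) := by
        ext i; simp [hA, Fin.lt_def]
      rw [this, Fin.card_Iio]
    have hAle : ∀ i ∈ A, c ≤ σ i ^2 := by
      intro i hi
      obtain ⟨-, hi⟩ := Finset.mem_filter.mp hi
      refine pow_le_pow_left₀ (hσ0 _) (hσdec i ⟨d, hd⟩ ?_) 2
      simp [Fin.le_def]; omega
    have hBle : ∀ i ∈ B, σ i ^2 ≤ c := by
      intro i hi
      obtain ⟨-, hi⟩ := Finset.mem_filter.mp hi
      refine pow_le_pow_left₀ (hσ0 _) (hσdec ⟨d, hd⟩ i ?_) 2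
      simp [Fin.le_def]; omega
    have hsplitT : ∑ i ∈ B, t i + ∑ i ∈ A, t i = ∑ i, t i :=
      Finset.sum_filter_add_sum_filter_not univ _ t
    have hsplitS : ∑ i ∈ B, σ i ^2 * (1 - t i) + ∑ i ∈ A, σ i ^2 * (1 - t i)
        = ∑ i, σ i ^2 * (1 - t i) :=
      Finset.sum_filter_add_sum_filter_not univ _ _
    have h2 : ∑ i ∈ B, σ i ^2 * (1 - t i) = ∑ i ∈ B, σ i ^2 - ∑ i ∈ B, σ i ^2 * t i := by
      rw [← Finset.sum_sub_distrib]
      exact Finset.sum_congr rfl fun i _ => by ring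
    have key : ∑ i ∈ B, σ i ^2 * t i ≤ ∑ i ∈ A, σ i ^2 * (1 - t i) := by
      calc ∑ i ∈ B, σ i ^2 * t i ≤ ∑ i ∈ B, c * t i :=
            Finset.sum_le_sum fun i hi => mul_le_mul_of_nonneg_right (hBle i hi) (ht0 i)
        _ = c * ∑ i ∈ B, t i := by rw [Finset.mul_sum]
        _ ≤ c * ((d:ℝ) - ∑ i ∈ A, t i) := by
            apply mul_le_mul_of_nonneg_left _ hcnn
            have := hsplitT; linarith
        _ ≤ c * ∑ i ∈ A, (1 - t i) := by
            apply mul_le_mul_of_nonneg_left _ hcnn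
            rw [Finset.sum_sub_distrib, Finset.sum_const, hcard, nsmul_eq_mul, mul_one]
        _ = ∑ i ∈ A, c * (1 - t i) := by rw [Finset.mul_sum]
        _ ≤ ∑ i ∈ A, σ i ^2 * (1 - t i) :=
            Finset.sum_le_sum fun i hi =>
              mul_le_mul_of_nonneg_right (hAle i hi) (by linarith [ht1 i])
    linarith

end aux

lemma aux_norm_sq_eq {n : ℕ} (x : EuclideanSpace ℝ (Fin n)) : ‖x‖^2 = ∑ j, (x j)^2 := by
  rw [EuclideanSpace.norm_sq_eq]
  simp [Real.norm_eq_abs, sq_abs]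

/-- lower bound for approximation on a feature-map manifold. -/
theorem manifold_approx_lower_bound
    (n k r p : ℕ) (hr : r ≤ min n k) (hp : p ≥ r)
    (V : Matrix (Fin n) (Fin r) ℝ) (W : Matrix (Fin n) (Fin p) ℝ)
    (h : (Fin r → ℝ) → (Fin p → ℝ))
    (S : Matrix (Fin n) (Fin k) ℝ)
    (σ : Fin (min n k) → ℝ) (u : Fin (min n k) → Fin n → ℝ)
    (v : Fin (min n k) → Fin k → ℝ)
    (hσdec : ∀ i j : Fin (min n k), i ≤ j → σ j ≤ σ i)
    (hσ0 : ∀ i, 0 ≤ σ i)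
    (hu : ∀ i j, ∑ x, u i x * u j x = if i = j then (1 : ℝ) else 0)
    (hv : ∀ i j, ∑ y, v i y * v j y = if i = j then (1 : ℝ) else 0)
    (hS : S = ∑ i, σ i • Matrix.vecMulVec (u i) (v i)) :
    ∑ i : Fin k,
        sInf ((fun xhat : Fin n → ℝ => ∑ j, (xhat j - S j i) ^ 2) ''
          {xhat | ∃ z : Fin r → ℝ, xhat = V.mulVec z + W.mulVec (h z)})
      ≥ ∑ i ∈ Finset.univ.filter (fun i : Fin (min n k) => p + r ≤ (i : ℕ)), σ i ^ 2 := by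
  classical
  -- the subspace spanned by the columns of V and W
  let fV : (Fin r → ℝ) →ₗ[ℝ] EuclideanSpace ℝ (Fin n) :=
    { toFun := fun z => WithLp.toLp 2 (V.mulVec z)
      map_add' := fun x y => by simp [Matrix.mulVec_add]
      map_smul' := fun c x => by simp [Matrix.mulVec_smul] }
  let fW : (Fin p → ℝ) →ₗ[ℝ] EuclideanSpace ℝ (Fin n) :=
    { toFun := fun z => WithLp.toLp 2 (W.mulVec z)
      map_add' := fun x y => by simp [Matrix.mulVec_add]
      map_smul' := fun c x => by simp [Matrix.mulVec_smul] }
  let U : Submodule ℝ (EuclideanSpace ℝ (Fin n)) := LinearMap.range fV ⊔ LinearMap.range fW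
  let P : EuclideanSpace ℝ (Fin n) →ₗ[ℝ] EuclideanSpace ℝ (Fin n) :=
    U.subtype.comp (U.orthogonalProjectionOnto).toLinearMap
  have hPmem : ∀ x, P x ∈ U := fun x => (U.orthogonalProjectionOnto x).2
  have hPorth : ∀ x, x - P x ∈ Uᗮ := fun x => U.sub_starProjection_mem_orthogonal x
  have hdecomp : ∀ x : EuclideanSpace ℝ (Fin n), ‖x - P x‖^2 = ‖x‖^2 - ‖P x‖^2 := by
    intro x
    have h0 : ⟪P x, x - P x⟫ = 0 :=
      Submodule.inner_right_of_mem_orthogonal (hPmem x) (hPorth x)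
    have he : P x + (x - P x) = x := by abel
    have hn := norm_add_sq_real (P x) (x - P x)
    rw [he, h0] at hn
    linarith
  -- orthonormal columns
  let ue : Fin (min n k) → EuclideanSpace ℝ (Fin n) := fun q => WithLp.toLp 2 (u q)
  have hue : Orthonormal ℝ ue := by
    rw [orthonormal_iff_ite]
    intro i j
    simpa [PiLp.inner_apply, RCLike.inner_apply, ue, mul_comm] using hu i j
  have huenorm : ∀ q, ‖ue q‖^2 = 1 := by
    intro q
    rw [← real_inner_self_eq_norm_sq]
    rw [real_inner_self_eq_norm_sq, EuclideanSpace.norm_sq_eq]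
    simpa [Real.norm_eq_abs, sq_abs, sq, ue] using hu q q
  -- the columns of S
  let xcol : Fin k → EuclideanSpace ℝ (Fin n) := fun i => WithLp.toLp 2 (fun a => S a i)
  have hxcol : ∀ i, xcol i = ∑ q, (σ q * v q i) • ue q := by
    intro i
    ext a
    rw [show (∑ q, (σ q * v q i) • ue q) a = ∑ q, (σ q * v q i) * ue q a from
      aux_sum_apply _ _ _ _]
    show S a i = _
    rw [hS]
    rw [Matrix.sum_apply]
    exact Finset.sum_congr rfl fun q _ => by
      simp [Matrix.vecMulVec_apply, ue]; ring
  have hC : ∑ i : Fin k, ‖xcol i‖^2 = ∑ q, σ q ^2 := by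
    calc ∑ i : Fin k, ‖xcol i‖^2 = ∑ i : Fin k, ‖∑ q, (σ q * v q i) • ue q‖^2 := by
          exact Finset.sum_congr rfl fun i _ => by rw [hxcol i]
      _ = ∑ q, σ q ^2 * ‖ue q‖^2 := aux_norm_sq_combo σ v hv ue
      _ = ∑ q, σ q ^2 := by simp [huenorm]
  let t : Fin (min n k) → ℝ := fun q => ‖P (ue q)‖^2
  have hD : ∑ i : Fin k, ‖P (xcol i)‖^2 = ∑ q, σ q ^2 * t q := by
    have hPx : ∀ i, P (xcol i) = ∑ q, (σ q * v q i) • P (ue q) := by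
      intro i
      rw [hxcol i, map_sum]
      exact Finset.sum_congr rfl fun q _ => map_smul P _ _
    calc ∑ i : Fin k, ‖P (xcol i)‖^2
        = ∑ i : Fin k, ‖∑ q, (σ q * v q i) • P (ue q)‖^2 :=
          Finset.sum_congr rfl fun i _ => by rw [hPx i]
      _ = ∑ q, σ q ^2 * t q := aux_norm_sq_combo σ v hv _
  have ht0 : ∀ q, 0 ≤ t q := fun q => sq_nonneg _
  have ht1 : ∀ q, t q ≤ 1 := by
    intro q
    have h1 := hdecomp (ue q)
    have h2 : (0:ℝ) ≤ ‖ue q - P (ue q)‖^2 := sq_nonneg _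
    have := huenorm q
    simp only [t]
    linarith
  -- trace bound
  have hts : ∑ q, t q ≤ ((p + r : ℕ) : ℝ) := by
    set m := Module.finrank ℝ ↥U with hm
    let b := stdOrthonormalBasis ℝ ↥U
    have hb : Orthonormal ℝ (fun j : Fin m => ((b j : EuclideanSpace ℝ (Fin n)))) := by
      rw [orthonormal_iff_ite]
      intro i j
      rw [← Submodule.coe_inner]
      exact orthonormal_iff_ite.mp b.orthonormal i j
    have hPsum : ∀ x, P x = ∑ j, ⟪(b j : EuclideanSpace ℝ (Fin n)), x⟫ • (b j : EuclideanSpace ℝ (Fin n)) := by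
      intro x
      have h1 := b.orthogonalProjectionOnto_apply_eq_sum x
      calc P x = ((U.orthogonalProjectionOnto x : ↥U) : EuclideanSpace ℝ (Fin n)) := rfl
        _ = _ := by rw [h1]; push_cast; rfl
    have htq : ∀ q, t q = ∑ j, ⟪(b j : EuclideanSpace ℝ (Fin n)), ue q⟫^2 := by
      intro q
      show ‖P (ue q)‖^2 = _
      rw [hPsum (ue q), aux_norm_sq_sum_smul hb]
    have hmle : m ≤ p + r := by
      have h1 : m ≤ Module.finrank ℝ ↥(LinearMap.range fV) + Module.finrank ℝ ↥(LinearMap.range fW) :=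
        Submodule.finrank_add_le_finrank_add_finrank _ _
      have h2 : Module.finrank ℝ ↥(LinearMap.range fV) ≤ r := by
        simpa using (LinearMap.finrank_range_le fV).trans_eq (by simp [Module.finrank_pi])
      have h3 : Module.finrank ℝ ↥(LinearMap.range fW) ≤ p := by
        simpa using (LinearMap.finrank_range_le fW).trans_eq (by simp [Module.finrank_pi])
      omega
    calc ∑ q, t q = ∑ q, ∑ j, ⟪(b j : EuclideanSpace ℝ (Fin n)), ue q⟫^2 :=
          Finset.sum_congr rfl fun q _ => htq q
      _ = ∑ j, ∑ q, ⟪ue q, (b j : EuclideanSpace ℝ (Fin n))⟫^2 := by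
          rw [Finset.sum_comm]
          exact Finset.sum_congr rfl fun j _ => Finset.sum_congr rfl fun q _ => by
            rw [real_inner_comm]
      _ ≤ ∑ j : Fin m, ‖(b j : EuclideanSpace ℝ (Fin n))‖^2 := by
          refine Finset.sum_le_sum fun j _ => ?_
          have := hue.sum_inner_products_le (x := (b j : EuclideanSpace ℝ (Fin n))) (s := univ)
          simpa [Real.norm_eq_abs, sq_abs] using this
      _ = ∑ j : Fin m, (1:ℝ) := by
          refine Finset.sum_congr rfl fun j _ => ?_
          have := hb.1 j
          rw [← real_inner_self_eq_norm_sq, real_inner_self_eq_norm_mul_norm, this]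
          norm_num
      _ = (m:ℝ) := by simp
      _ ≤ ((p + r : ℕ) : ℝ) := by exact_mod_cast hmle
  -- per-column lower bound
  have hinf : ∀ i : Fin k,
      ‖xcol i - P (xcol i)‖^2 ≤
        sInf ((fun xhat : Fin n → ℝ => ∑ j, (xhat j - S j i) ^ 2) ''
          {xhat | ∃ z : Fin r → ℝ, xhat = V.mulVec z + W.mulVec (h z)}) := by
    intro i
    apply le_csInf
    · exact ⟨_, ⟨V.mulVec 0 + W.mulVec (h 0), ⟨0, rfl⟩, rfl⟩⟩
    · rintro bb ⟨xhat, ⟨z, rfl⟩, rfl⟩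
      have hmem : (WithLp.toLp 2 (V.mulVec z + W.mulVec (h z)) : EuclideanSpace ℝ (Fin n)) ∈ U := by
        rw [WithLp.toLp_add]
        exact Submodule.add_mem _ (Submodule.mem_sup_left ⟨z, rfl⟩)
          (Submodule.mem_sup_right ⟨h z, rfl⟩)
      set xh : EuclideanSpace ℝ (Fin n) := WithLp.toLp 2 (V.mulVec z + W.mulVec (h z)) with hxh
      have hb2 : ∑ j, (xh j - S j i)^2 = ‖xh - xcol i‖^2 := by
        rw [aux_norm_sq_eq]
        exact Finset.sum_congr rfl fun j _ => rfl
      have h0 : ⟪xcol i - P (xcol i), P (xcol i) - xh⟫ = 0 := by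
        rw [real_inner_comm]
        exact Submodule.inner_right_of_mem_orthogonal
          (Submodule.sub_mem _ (hPmem _) hmem) (hPorth _)
      have he : (xcol i - P (xcol i)) + (P (xcol i) - xh) = xcol i - xh := by abel
      have hn := norm_add_sq_real (xcol i - P (xcol i)) (P (xcol i) - xh)
      rw [he, h0] at hn
      have hrev : ‖xcol i - xh‖ = ‖xh - xcol i‖ := norm_sub_rev _ _
      show ‖xcol i - P (xcol i)‖^2 ≤ ∑ j, (xh j - S j i)^2
      rw [hb2, ← hrev]
      have := sq_nonneg ‖P (xcol i) - xh‖
      linarith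
  -- assemble
  rw [ge_iff_le]
  calc ∑ i ∈ Finset.univ.filter (fun i : Fin (min n k) => p + r ≤ (i : ℕ)), σ i ^ 2
      ≤ ∑ q, σ q ^2 * (1 - t q) :=
        aux_rearrange (min n k) (p + r) σ t hσdec hσ0 ht0 ht1 hts
    _ = ∑ q, σ q ^2 - ∑ q, σ q ^2 * t q := by
        rw [← Finset.sum_sub_distrib]
        exact Finset.sum_congr rfl fun q _ => by ring
    _ = ∑ i : Fin k, ‖xcol i‖^2 - ∑ i : Fin k, ‖P (xcol i)‖^2 := by rw [hC, hD]
    _ = ∑ i : Fin k, ‖xcol i - P (xcol i)‖^2 := by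
        rw [← Finset.sum_sub_distrib]
        exact Finset.sum_congr rfl fun i _ => (hdecomp _).symm
    _ ≤ _ := Finset.sum_le_sum fun i _ => hinf i
end

section
/- Let n, k, r be natural numbers with r ≤ min(n,k), set ℓ = min(n,k) and p = r(r+1)/2. Let V ∈ ℝ^{n×r}, W ∈ ℝ^{n×p}, let h_q : ℝ^r → ℝ^{r(r+1)/2} be the quadratic feature map whose components are all products z_i z_j with 1 ≤ i ≤ j ≤ r, and let M = { V z + W h_q(z) : z ∈ ℝ^r } be the associated quadratic manifold. Let S ∈ ℝ^{n×k} have columns x^(1), …, x^(k) and singular values σ_1 ≥ … ≥ σ_ℓ. Then Σ_{i=1}^{k} inf_{x̂ ∈ M} ‖x̂ − x^(i)‖₂² ≥ Σ_{i=r(r+1)/2+r+1}^{ℓ} σ_i². -/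
lemma card_quad (r : ℕ) :
    Fintype.card {ij : Fin r × Fin r // ij.1 ≤ ij.2} = r * (r + 1) / 2 := by
  classical
  rw [Fintype.card_subtype]
  have h1 : (Finset.univ.filter (fun ij : Fin r × Fin r => ij.1 ≤ ij.2)).card
      = ∑ i : Fin r, ((r : ℕ) - (i : ℕ)) := by
    rw [Finset.card_filter, ← Finset.univ_product_univ, Finset.sum_product]
    congr 1; ext i
    rw [← Finset.card_filter]
    have : (Finset.univ.filter (fun y : Fin r => (i, y).1 ≤ (i, y).2)) = Finset.Ici i := by
      ext y; simp
    rw [this, Fin.card_Ici]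
  rw [h1, Fin.sum_univ_eq_sum_range (fun i => r - i),
    ← Finset.sum_range_reflect (fun i => r - i) r]
  have h2 : ∀ j ∈ Finset.range r, r - (r - 1 - j) = j + 1 := by
    intro j hj; simp at hj; omega
  rw [Finset.sum_congr rfl h2]
  have h3 := Finset.sum_range_succ' (fun i => i) r
  have h4 := Finset.sum_range_id (r + 1)
  rw [h3] at h4
  simpa [Nat.mul_comm] using h4

lemma tail_sum_le (ℓ m : ℕ) (σ τ : Fin ℓ → ℝ)
    (hσdec : ∀ i j : Fin ℓ, i ≤ j → σ j ≤ σ i) (hσ0 : ∀ i, 0 ≤ σ i)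
    (hτ0 : ∀ j, 0 ≤ τ j) (hτ1 : ∀ j, τ j ≤ 1) (hτsum : ∑ j, τ j ≤ (m : ℝ)) :
    ∑ i ∈ Finset.univ.filter (fun i : Fin ℓ => m ≤ (i : ℕ)), σ i ^ 2
      ≤ ∑ j, σ j ^ 2 * (1 - τ j) := by
  classical
  by_cases hm : m < ℓ
  · set m0 : Fin ℓ := ⟨m, hm⟩ with hm0
    have hfil : Finset.univ.filter (fun i : Fin ℓ => m ≤ (i : ℕ)) = Finset.Ici m0 := by
      ext i; simp [Fin.le_def, hm0]
    have hsplit : (Finset.univ : Finset (Fin ℓ)) = Finset.Iio m0 ∪ Finset.Ici m0 := by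
      ext i; simp [lt_or_ge]
    have hdisj : Disjoint (Finset.Iio m0) (Finset.Ici m0) := by
      simp [Finset.disjoint_left]
    have hsum : ∀ f : Fin ℓ → ℝ, ∑ j, f j = ∑ j ∈ Finset.Iio m0, f j + ∑ j ∈ Finset.Ici m0, f j := by
      intro f; rw [← Finset.sum_union hdisj, ← hsplit]
    rw [hfil, hsum (fun j => σ j ^ 2 * (1 - τ j))]
    have hcard : (Finset.Iio m0).card = m := by rw [Fin.card_Iio]
    have key : ∑ j ∈ Finset.Ici m0, σ j ^ 2 * τ j ≤ ∑ j ∈ Finset.Iio m0, σ j ^ 2 * (1 - τ j) := by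
      have c0 : (0:ℝ) ≤ σ m0 ^ 2 := sq_nonneg _
      have s1 : ∑ j ∈ Finset.Ici m0, σ j ^ 2 * τ j ≤ σ m0 ^ 2 * ∑ j ∈ Finset.Ici m0, τ j := by
        rw [Finset.mul_sum]
        apply Finset.sum_le_sum
        intro j hj
        simp only [Finset.mem_Ici] at hj
        have : σ j ≤ σ m0 := hσdec _ _ hj
        have : σ j ^ 2 ≤ σ m0 ^ 2 := by
          apply pow_le_pow_left₀ (hσ0 j) this
        exact mul_le_mul_of_nonneg_right this (hτ0 j)
      have s2 : σ m0 ^ 2 * ∑ j ∈ Finset.Ici m0, τ j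
          ≤ σ m0 ^ 2 * ∑ j ∈ Finset.Iio m0, (1 - τ j) := by
        apply mul_le_mul_of_nonneg_left _ c0
        have h1 : ∑ j ∈ Finset.Iio m0, (1 - τ j) = (m : ℝ) - ∑ j ∈ Finset.Iio m0, τ j := by
          rw [Finset.sum_sub_distrib, Finset.sum_const, hcard]; simp
        have h2 : ∑ j ∈ Finset.Iio m0, τ j + ∑ j ∈ Finset.Ici m0, τ j ≤ (m : ℝ) := by
          rw [← hsum τ]; exact hτsum
        linarith
      have s3 : σ m0 ^ 2 * ∑ j ∈ Finset.Iio m0, (1 - τ j)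
          ≤ ∑ j ∈ Finset.Iio m0, σ j ^ 2 * (1 - τ j) := by
        rw [Finset.mul_sum]
        apply Finset.sum_le_sum
        intro j hj
        simp only [Finset.mem_Iio] at hj
        have h1 : σ m0 ^ 2 ≤ σ j ^ 2 := pow_le_pow_left₀ (hσ0 m0) (hσdec _ _ (le_of_lt hj)) 2
        have h2 : 0 ≤ 1 - τ j := by linarith [hτ1 j]
        exact mul_le_mul_of_nonneg_right h1 h2
      linarith
    have expand : ∀ j ∈ Finset.Ici m0, σ j ^ 2 = σ j ^ 2 * (1 - τ j) + σ j ^ 2 * τ j := by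
      intro j _; ring
    rw [Finset.sum_congr rfl expand, Finset.sum_add_distrib]
    have pos : (0:ℝ) ≤ ∑ j ∈ Finset.Iio m0, σ j ^ 2 * (1 - τ j) - ∑ j ∈ Finset.Ici m0, σ j ^ 2 * τ j := by
      linarith
    linarith
  · have : Finset.univ.filter (fun i : Fin ℓ => m ≤ (i : ℕ)) = ∅ := by
      ext i; simp only [Finset.mem_filter, Finset.mem_univ, true_and, Finset.notMem_empty,
        iff_false]
      omega
    rw [this, Finset.sum_empty]
    apply Finset.sum_nonneg
    intro j _
    exact mul_nonneg (sq_nonneg _) (by linarith [hτ1 j])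

open Module in
lemma sum_sq_proj_le {E : Type*} [NormedAddCommGroup E] [InnerProductSpace ℝ E]
    [FiniteDimensional ℝ E] (U : Submodule ℝ E) {ι : Type*} [Fintype ι]
    (u : ι → E) (hu : Orthonormal ℝ u) :
    ∑ j, ‖(U.orthogonalProjectionOnto (u j) : E)‖ ^ 2 ≤ (finrank ℝ U : ℝ) := by
  classical
  set b := stdOrthonormalBasis ℝ U with hb
  have key : ∀ x : E, ‖(U.orthogonalProjectionOnto x : E)‖ ^ 2
      = ∑ s, (inner ℝ ((b s : E)) x : ℝ) ^ 2 := by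
    intro x
    have h1 : ‖(U.orthogonalProjectionOnto x : E)‖ = ‖U.orthogonalProjectionOnto x‖ := by
      rw [Submodule.norm_coe]
    rw [h1, ← b.repr.norm_map (U.orthogonalProjectionOnto x)]
    rw [EuclideanSpace.norm_eq]
    rw [Real.sq_sqrt (by positivity)]
    congr 1; ext s
    rw [OrthonormalBasis.repr_apply_apply]
    have h2 : (inner ℝ (b s) (U.orthogonalProjectionOnto x) : ℝ) = inner ℝ ((b s : E)) x := by
      rw [Submodule.coe_inner]
      have h3 : (inner ℝ ((b s : E)) (x - (U.orthogonalProjectionOnto x : E)) : ℝ) = 0 :=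
        Submodule.inner_right_of_mem_orthogonal (b s).2
          (Submodule.sub_starProjection_mem_orthogonal x)
      rw [inner_sub_right] at h3
      linarith
    rw [h2]
    simp [Real.norm_eq_abs, sq_abs]
  calc ∑ j, ‖(U.orthogonalProjectionOnto (u j) : E)‖ ^ 2
      = ∑ s, ∑ j, (inner ℝ (u j) ((b s : E)) : ℝ) ^ 2 := by
        rw [Finset.sum_comm]
        congr 1; ext j
        rw [key (u j)]
        congr 1; ext s
        rw [real_inner_comm]
    _ ≤ ∑ s : Fin (finrank ℝ U), (1 : ℝ) := by
        apply Finset.sum_le_sum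
        intro s _
        have := hu.sum_inner_products_le ((b s : E)) (s := Finset.univ)
        have hnorm : ‖(b s : E)‖ = 1 := by
          rw [Submodule.norm_coe]; exact b.orthonormal.1 s
        rw [hnorm] at this
        simpa [Real.norm_eq_abs, sq_abs] using this
    _ = (finrank ℝ U : ℝ) := by simp

noncomputable def phi (n : ℕ) : (Fin n → ℝ) ≃ₗ[ℝ] EuclideanSpace ℝ (Fin n) :=
  (WithLp.linearEquiv 2 ℝ (Fin n → ℝ)).symm

lemma phi_apply {n : ℕ} (x : Fin n → ℝ) (i : Fin n) : phi n x i = x i := rfl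

lemma phi_inner {n : ℕ} (x y : Fin n → ℝ) :
    (inner ℝ (phi n x) (phi n y) : ℝ) = ∑ i, x i * y i := by
  rw [PiLp.inner_apply]
  simp [RCLike.inner_apply, phi_apply, mul_comm]

lemma phi_normsq {n : ℕ} (x : Fin n → ℝ) : ‖phi n x‖ ^ 2 = ∑ i, (x i) ^ 2 := by
  rw [← real_inner_self_eq_norm_sq, phi_inner]
  congr 1; ext i; ring

lemma proj_sq_le {E : Type*} [NormedAddCommGroup E] [InnerProductSpace ℝ E]
    [FiniteDimensional ℝ E] (U : Submodule ℝ E) (y w : E) (hw : w ∈ U) :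
    ‖y - (U.orthogonalProjectionOnto y : E)‖ ^ 2 ≤ ‖y - w‖ ^ 2 := by
  set Qy : E := (U.orthogonalProjectionOnto y : E) with hQ
  have hdecomp : y - w = (y - Qy) + (Qy - w) := by abel
  have ha : y - Qy ∈ Uᗮ := Submodule.sub_starProjection_mem_orthogonal y
  have hb : Qy - w ∈ U := Submodule.sub_mem U (U.orthogonalProjectionOnto y).2 hw
  have hinner : (inner ℝ (y - Qy) (Qy - w) : ℝ) = 0 :=
    Submodule.inner_left_of_mem_orthogonal hb ha
  have := norm_add_sq_real (y - Qy) (Qy - w)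
  rw [← hdecomp, hinner] at this
  nlinarith [sq_nonneg ‖Qy - w‖]

lemma norm_sq_proj_add {E : Type*} [NormedAddCommGroup E] [InnerProductSpace ℝ E]
    [FiniteDimensional ℝ E] (U : Submodule ℝ E) (x : E) :
    ‖(U.orthogonalProjectionOnto x : E)‖ ^ 2 + ‖x - (U.orthogonalProjectionOnto x : E)‖ ^ 2
      = ‖x‖ ^ 2 := by
  set Qx : E := (U.orthogonalProjectionOnto x : E) with hQ
  have hdecomp : x = Qx + (x - Qx) := by abel
  have ha : x - Qx ∈ Uᗮ := Submodule.sub_starProjection_mem_orthogonal x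
  have hinner : (inner ℝ Qx (x - Qx) : ℝ) = 0 :=
    Submodule.inner_right_of_mem_orthogonal (U.orthogonalProjectionOnto x).2 ha
  have := norm_add_sq_real Qx (x - Qx)
  rw [← hdecomp, hinner] at this
  linarith

lemma inner_sum_smul {E : Type*} [NormedAddCommGroup E] [InnerProductSpace ℝ E]
    {ι : Type*} [Fintype ι] (c d : ι → ℝ) (w : ι → E) :
    (inner ℝ (∑ j, c j • w j) (∑ j, d j • w j) : ℝ)
      = ∑ j, ∑ j', (c j * d j') * inner ℝ (w j) (w j') := by
  rw [sum_inner]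
  refine Finset.sum_congr rfl fun j _ => ?_
  rw [real_inner_smul_left, inner_sum, Finset.mul_sum]
  refine Finset.sum_congr rfl fun j' _ => ?_
  rw [real_inner_smul_right]; ring


set_option maxHeartbeats 1000000 in
/-- lower bound for approximation on a quadratic manifold, where the
feature map is the quadratic feature map with components `z i * z j`, `i ≤ j`
(indexed by the pairs `(i, j)` with `i ≤ j`, of which there are `r * (r + 1) / 2`). -/
theorem quadratic_manifold_approx_lower_bound
    (n k r : ℕ) (hr : r ≤ min n k)
    (V : Matrix (Fin n) (Fin r) ℝ)
    (W : Matrix (Fin n) {ij : Fin r × Fin r // ij.1 ≤ ij.2} ℝ)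
    (S : Matrix (Fin n) (Fin k) ℝ)
    (σ : Fin (min n k) → ℝ) (u : Fin (min n k) → Fin n → ℝ)
    (v : Fin (min n k) → Fin k → ℝ)
    (hσdec : ∀ i j : Fin (min n k), i ≤ j → σ j ≤ σ i)
    (hσ0 : ∀ i, 0 ≤ σ i)
    (hu : ∀ i j, ∑ x, u i x * u j x = if i = j then (1 : ℝ) else 0)
    (hv : ∀ i j, ∑ y, v i y * v j y = if i = j then (1 : ℝ) else 0)
    (hS : S = ∑ i, σ i • Matrix.vecMulVec (u i) (v i)) :
    ∑ i : Fin k,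
        sInf ((fun xhat : Fin n → ℝ => ∑ j, (xhat j - S j i) ^ 2) ''
          {xhat | ∃ z : Fin r → ℝ,
            xhat = V.mulVec z +
              W.mulVec (fun ij : {ij : Fin r × Fin r // ij.1 ≤ ij.2} =>
                z ij.val.1 * z ij.val.2)})
      ≥ ∑ i ∈ Finset.univ.filter
            (fun i : Fin (min n k) => r * (r + 1) / 2 + r ≤ (i : ℕ)), σ i ^ 2 := by
  classical
  set E := EuclideanSpace ℝ (Fin n) with hE
  set g : (Fin r ⊕ {ij : Fin r × Fin r // ij.1 ≤ ij.2}) → E :=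
    Sum.elim (fun a => phi n (fun i => V i a)) (fun c => phi n (fun i => W i c)) with hg
  set U : Submodule ℝ E := Submodule.span ℝ (Set.range g) with hU
  -- rank bound
  have hrank : Module.finrank ℝ U ≤ r * (r + 1) / 2 + r := by
    have h1 := finrank_range_le_card (R := ℝ) g
    have h3 : Fintype.card (Fin r ⊕ {ij : Fin r × Fin r // ij.1 ≤ ij.2}) = r + r * (r + 1) / 2 := by
      rw [Fintype.card_sum, Fintype.card_fin, card_quad]
    rw [h3] at h1
    have h2 : Set.finrank ℝ (Set.range g) = Module.finrank ℝ U := rfl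
    omega
  -- membership of manifold points
  have hmulV : ∀ z : Fin r → ℝ, phi n (V.mulVec z) = ∑ a, z a • g (Sum.inl a) := by
    intro z
    have h0 : V.mulVec z = ∑ a, z a • (fun i => V i a) := by
      ext i
      simp [Matrix.mulVec, dotProduct, Finset.sum_apply, mul_comm]
    rw [h0, map_sum]
    simp [hg]
  have hmulW : ∀ h : {ij : Fin r × Fin r // ij.1 ≤ ij.2} → ℝ, phi n (W.mulVec h) = ∑ c, h c • g (Sum.inr c) := by
    intro h
    have h0 : W.mulVec h = ∑ c, h c • (fun i => W i c) := by
      ext i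
      simp [Matrix.mulVec, dotProduct, Finset.sum_apply, mul_comm]
    rw [h0, map_sum]
    simp [hg]
  have hmem : ∀ z : Fin r → ℝ,
      phi n (V.mulVec z + W.mulVec (fun ij : {ij : Fin r × Fin r // ij.1 ≤ ij.2} => z ij.val.1 * z ij.val.2)) ∈ U := by
    intro z
    rw [map_add, hmulV, hmulW]
    refine Submodule.add_mem _ ?_ ?_
    · exact Submodule.sum_mem _ fun a _ => Submodule.smul_mem _ _
        (Submodule.subset_span (Set.mem_range_self _))
    · exact Submodule.sum_mem _ fun c _ => Submodule.smul_mem _ _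
        (Submodule.subset_span (Set.mem_range_self _))
  -- notation
  set xc : Fin k → E := fun i => phi n (fun j => S j i) with hxc
  set u' : Fin (min n k) → E := fun j => phi n (u j) with hu'
  set Q : E → E := fun x => ((U.orthogonalProjectionOnto x : U) : E) with hQ
  set w : Fin (min n k) → E := fun j => u' j - Q (u' j) with hw
  set τ : Fin (min n k) → ℝ := fun j => ‖Q (u' j)‖ ^ 2 with hτ
  set d : Fin k → ℝ := fun i => ‖xc i - Q (xc i)‖ ^ 2 with hd
  -- per-column lower bound via projection
  have hinf : ∀ i : Fin k,
      d i ≤ sInf ((fun xhat : Fin n → ℝ => ∑ j, (xhat j - S j i) ^ 2) ''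
        {xhat | ∃ z : Fin r → ℝ,
          xhat = V.mulVec z +
            W.mulVec (fun ij : {ij : Fin r × Fin r // ij.1 ≤ ij.2} => z ij.val.1 * z ij.val.2)}) := by
    intro i
    apply le_csInf
    · exact Set.Nonempty.image _ ⟨_, 0, rfl⟩
    · rintro b ⟨xhat, ⟨z, rfl⟩, rfl⟩
      set yv : Fin n → ℝ := V.mulVec z + W.mulVec (fun ij : {ij : Fin r × Fin r // ij.1 ≤ ij.2} => z ij.val.1 * z ij.val.2)
        with hyv
      have heq : ∑ j, (yv j - S j i) ^ 2 = ‖xc i - phi n yv‖ ^ 2 := by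
        rw [norm_sub_rev, hxc]
        rw [← map_sub (phi n) yv (fun j => S j i), phi_normsq]
        simp [Pi.sub_apply]
      simp only [heq]
      have := proj_sq_le U (xc i) (phi n yv) (hmem z)
      exact this
  -- column decomposition
  have hcol : ∀ i : Fin k, xc i = ∑ j, (σ j * v j i) • u' j := by
    intro i
    have h0 : (fun j' => S j' i) = ∑ j, (σ j * v j i) • u j := by
      ext j'
      rw [hS]
      simp only [Matrix.sum_apply, Matrix.smul_apply, Matrix.vecMulVec_apply, smul_eq_mul,
        Finset.sum_apply, Pi.smul_apply]
      exact Finset.sum_congr rfl fun j _ => by ring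
    rw [hxc]
    simp only [h0, map_sum, map_smul]
    rfl
  -- the linear projection complement
  set Plin : E →ₗ[ℝ] E :=
    LinearMap.id - (U.subtype ∘ₗ (U.orthogonalProjectionOnto : E →L[ℝ] U).toLinearMap) with hPlin
  have hP : ∀ x : E, Plin x = x - Q x := by
    intro x; simp [hPlin, hQ]
  -- sum identity
  have hid : ∑ i : Fin k, d i = ∑ j, σ j ^ 2 * ‖w j‖ ^ 2 := by
    have hPd : ∀ i : Fin k, d i
        = ∑ j, ∑ j', ((σ j * v j i) * (σ j' * v j' i)) * (inner ℝ (w j) (w j') : ℝ) := by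
      intro i
      have h1 : xc i - Q (xc i) = ∑ j, (σ j * v j i) • w j := by
        rw [← hP (xc i), hcol i, map_sum]
        refine Finset.sum_congr rfl fun j _ => ?_
        rw [map_smul, hP]
      rw [hd]
      simp only [h1]
      rw [← real_inner_self_eq_norm_sq, inner_sum_smul]
    rw [Finset.sum_congr rfl fun i _ => hPd i, Finset.sum_comm]
    refine Finset.sum_congr rfl fun j _ => ?_
    rw [Finset.sum_comm]
    have h2 : ∀ j', ∑ i, ((σ j * v j i) * (σ j' * v j' i)) * (inner ℝ (w j) (w j') : ℝ)
        = (σ j * σ j' * (inner ℝ (w j) (w j') : ℝ)) * (if j = j' then (1:ℝ) else 0) := by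
      intro j'
      rw [← hv j j', Finset.mul_sum]
      exact Finset.sum_congr rfl fun i _ => by ring
    rw [Finset.sum_congr rfl fun j' _ => h2 j']
    simp only [mul_ite, mul_one, mul_zero, Finset.sum_ite_eq, Finset.mem_univ, if_true]
    rw [real_inner_self_eq_norm_sq]; ring
  -- norms of singular vectors
  have hnorm_u : ∀ j, ‖u' j‖ ^ 2 = 1 := by
    intro j
    rw [hu', phi_normsq]
    have h1 := hu j j
    rw [if_pos rfl] at h1
    rw [← h1]
    exact Finset.sum_congr rfl fun x _ => pow_two (u j x)
  have hw_norm : ∀ j, ‖w j‖ ^ 2 = 1 - τ j := by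
    intro j
    have h0 := norm_sq_proj_add U (u' j)
    rw [hnorm_u j] at h0
    simp only [hw, hτ, hQ]
    linarith
  have hτ0 : ∀ j, 0 ≤ τ j := fun j => sq_nonneg _
  have hτ1 : ∀ j, τ j ≤ 1 := by
    intro j
    have h1 := hw_norm j
    nlinarith [sq_nonneg ‖w j‖]
  -- orthonormality and trace bound
  have hON : Orthonormal ℝ u' := by
    rw [orthonormal_iff_ite]
    intro i j
    rw [hu']
    simp only []
    rw [phi_inner]
    exact hu i j
  have hτsum : ∑ j, τ j ≤ ((r * (r + 1) / 2 + r : ℕ) : ℝ) := by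
    calc ∑ j, τ j ≤ (Module.finrank ℝ U : ℝ) := sum_sq_proj_le U u' hON
      _ ≤ _ := by exact_mod_cast hrank
  -- conclude
  have hfinal := tail_sum_le (min n k) (r * (r + 1) / 2 + r) σ τ hσdec hσ0 hτ0 hτ1 hτsum
  rw [ge_iff_le]
  calc ∑ i ∈ Finset.univ.filter
        (fun i : Fin (min n k) => r * (r + 1) / 2 + r ≤ (i : ℕ)), σ i ^ 2
      ≤ ∑ j, σ j ^ 2 * (1 - τ j) := hfinal
    _ = ∑ j, σ j ^ 2 * ‖w j‖ ^ 2 := by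
        exact Finset.sum_congr rfl fun j _ => by rw [hw_norm j]
    _ = ∑ i : Fin k, d i := hid.symm
    _ ≤ _ := Finset.sum_le_sum fun i _ => hinf i
end

section
/- Let U ∈ ℝ^{n×m} have orthonormal columns (Uᵀ U = I_m), let B ∈ ℝ^{m×k}, H ∈ ℝ^{p×k}, and γ ≥ 0. Then the regularized least-squares problems over the full-dimensional and the reduced-dimensional weight matrices have the same optimal value: inf_{W ∈ ℝ^{n×p}} ( ‖U B − W H‖_F² + γ ‖W‖_F² ) = inf_{W' ∈ ℝ^{m×p}} ( ‖B − W' H‖_F² + γ ‖W'‖_F² ). -/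
open Matrix

private lemma fro_eq_trace {n q : ℕ} (A : Matrix (Fin n) (Fin q) ℝ) :
    (∑ a, ∑ b, (A a b) ^ 2) = Matrix.trace (Aᵀ * A) := by
  simp only [Matrix.trace, Matrix.diag_apply, Matrix.mul_apply, Matrix.transpose_apply, sq]
  rw [Finset.sum_comm]

private lemma trace_nonneg' {n q : ℕ} (A : Matrix (Fin n) (Fin q) ℝ) :
    0 ≤ Matrix.trace (Aᵀ * A) := by
  rw [← fro_eq_trace]
  positivity

private lemma key_le {n m q : ℕ} (U : Matrix (Fin n) (Fin m) ℝ) (hU : Uᵀ * U = 1)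
    (A : Matrix (Fin n) (Fin q) ℝ) :
    (∑ a, ∑ b, ((Uᵀ * A) a b) ^ 2) ≤ ∑ a, ∑ b, (A a b) ^ 2 := by
  rw [fro_eq_trace, fro_eq_trace]
  set P : Matrix (Fin n) (Fin n) ℝ := 1 - U * Uᵀ with hP
  have hPT : Pᵀ = P := by
    simp [hP, Matrix.transpose_sub, Matrix.transpose_mul]
  have hPP : P * P = P := by
    simp only [hP, Matrix.sub_mul, Matrix.mul_sub, Matrix.one_mul, Matrix.mul_one]
    have h2 : U * Uᵀ * (U * Uᵀ) = U * Uᵀ := by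
      rw [Matrix.mul_assoc U Uᵀ (U * Uᵀ), ← Matrix.mul_assoc Uᵀ U Uᵀ, hU, Matrix.one_mul]
    rw [h2]
    abel
  have hkey : (P * A)ᵀ * (P * A) = Aᵀ * A - (Uᵀ * A)ᵀ * (Uᵀ * A) := by
    rw [Matrix.transpose_mul, hPT, Matrix.mul_assoc, ← Matrix.mul_assoc P P A, hPP]
    simp only [hP, Matrix.sub_mul, Matrix.one_mul, Matrix.mul_sub,
      Matrix.transpose_mul, Matrix.transpose_transpose]
    rw [Matrix.mul_assoc Aᵀ U (Uᵀ * A), ← Matrix.mul_assoc U Uᵀ A]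
  have h0 : 0 ≤ Matrix.trace ((P * A)ᵀ * (P * A)) := trace_nonneg' _
  rw [hkey, Matrix.trace_sub] at h0
  linarith

private lemma key_eq {n m q : ℕ} (U : Matrix (Fin n) (Fin m) ℝ) (hU : Uᵀ * U = 1)
    (X : Matrix (Fin m) (Fin q) ℝ) :
    (∑ a, ∑ b, ((U * X) a b) ^ 2) = ∑ a, ∑ b, (X a b) ^ 2 := by
  rw [fro_eq_trace, fro_eq_trace, Matrix.transpose_mul, Matrix.mul_assoc,
    ← Matrix.mul_assoc Uᵀ U X, hU, Matrix.one_mul]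

/-- for `U` with orthonormal columns, the regularized least-squares
problems over `W ∈ ℝ^{n×p}` (full dimension) and `W' ∈ ℝ^{m×p}` (reduced dimension)
have the same optimal value. -/
theorem regularized_lsq_dimension_reduction
    (n m p k : ℕ)
    (U : Matrix (Fin n) (Fin m) ℝ) (hU : Uᵀ * U = 1)
    (B : Matrix (Fin m) (Fin k) ℝ) (H : Matrix (Fin p) (Fin k) ℝ)
    (γ : ℝ) (hγ : 0 ≤ γ) :
    (⨅ W : Matrix (Fin n) (Fin p) ℝ,
        (∑ a, ∑ b, ((U * B - W * H) a b) ^ 2) + γ * ∑ a, ∑ b, (W a b) ^ 2)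
      = ⨅ W' : Matrix (Fin m) (Fin p) ℝ,
          (∑ a, ∑ b, ((B - W' * H) a b) ^ 2) + γ * ∑ a, ∑ b, (W' a b) ^ 2 := by
  have bdd1 : BddBelow (Set.range fun W : Matrix (Fin n) (Fin p) ℝ =>
      (∑ a, ∑ b, ((U * B - W * H) a b) ^ 2) + γ * ∑ a, ∑ b, (W a b) ^ 2) := by
    refine ⟨0, ?_⟩
    rintro _ ⟨W, rfl⟩
    positivity
  have bdd2 : BddBelow (Set.range fun W' : Matrix (Fin m) (Fin p) ℝ =>
      (∑ a, ∑ b, ((B - W' * H) a b) ^ 2) + γ * ∑ a, ∑ b, (W' a b) ^ 2) := by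
    refine ⟨0, ?_⟩
    rintro _ ⟨W', rfl⟩
    positivity
  apply le_antisymm
  · refine le_ciInf fun W' => ?_
    refine le_trans (ciInf_le bdd1 (U * W')) ?_
    have h1 : U * B - U * W' * H = U * (B - W' * H) := by
      rw [Matrix.mul_sub, Matrix.mul_assoc]
    rw [h1, key_eq U hU, key_eq U hU]
  · refine le_ciInf fun W => ?_
    refine le_trans (ciInf_le bdd2 (Uᵀ * W)) ?_
    have h1 : B - Uᵀ * W * H = Uᵀ * (U * B - W * H) := by
      rw [Matrix.mul_sub, ← Matrix.mul_assoc, hU, Matrix.one_mul, Matrix.mul_assoc]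
    rw [h1]
    exact add_le_add (key_le U hU _) (mul_le_mul_of_nonneg_left (key_le U hU _) hγ)
end

section
/- Let n ≥ k, let S ∈ ℝ^{n×k} admit the decomposition S = Σ_{i=1}^{k} σ_i u_i v_iᵀ with u_1, …, u_k ∈ ℝ^n orthonormal, v_1, …, v_k ∈ ℝ^k orthonormal and σ_i ≥ 0, let J ⊆ {1, …, k} with |J| = i, and let P = U_J U_Jᵀ be the orthogonal projector onto span{u_j : j ∈ J}. Let H ∈ ℝ^{p×k} and γ ≥ 0. Then inf_{W ∈ ℝ^{n×p}} ( ‖P S + W H − S‖_F² + γ ‖W‖_F² ) = inf_{W' ∈ ℝ^{(k−i)×p}} ( ‖Σ_{Jᶜ} V_{Jᶜ}ᵀ + W' H‖_F² + γ ‖W'‖_F² ), where Σ_{Jᶜ} is the diagonal matrix of the σ_j with j ∉ J and V_{Jᶜ} has columns v_j, j ∉ J. -/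
open Matrix

noncomputable def fro {m n : Type*} [Fintype m] [Fintype n] (A : Matrix m n ℝ) : ℝ :=
  ∑ a, ∑ b, (A a b) ^ 2

lemma fro_eq_trace_s9 {m n : Type*} [Fintype m] [Fintype n] (A : Matrix m n ℝ) :
    fro A = Matrix.trace (Aᵀ * A) := by
  unfold fro Matrix.trace
  rw [Finset.sum_comm]
  simp [Matrix.mul_apply, Matrix.diag, sq]

lemma fro_nonneg {m n : Type*} [Fintype m] [Fintype n] (A : Matrix m n ℝ) : 0 ≤ fro A := by
  unfold fro; positivity

lemma fro_neg {m n : Type*} [Fintype m] [Fintype n] (A : Matrix m n ℝ) : fro (-A) = fro A := by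
  simp [fro]

lemma fro_mul_isometry {m n p : Type*} [Fintype m] [Fintype n] [Fintype p] [DecidableEq n]
    (Q : Matrix m n ℝ) (hQ : Qᵀ * Q = 1) (X : Matrix n p ℝ) :
    fro (Q * X) = fro X := by
  rw [fro_eq_trace_s9, fro_eq_trace_s9, Matrix.transpose_mul, Matrix.mul_assoc,
    ← Matrix.mul_assoc Qᵀ, hQ, Matrix.one_mul]

lemma fro_transpose_mul_le {m n p : Type*} [Fintype m] [Fintype n] [Fintype p]
    [DecidableEq m] [DecidableEq n]
    (Q : Matrix m n ℝ) (hQ : Qᵀ * Q = 1) (Y : Matrix m p ℝ) :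
    fro (Qᵀ * Y) ≤ fro Y := by
  have hproj : Q * Qᵀ * (Q * Qᵀ) = Q * Qᵀ := by
    rw [Matrix.mul_assoc, ← Matrix.mul_assoc Qᵀ, hQ, Matrix.one_mul]
  set E : Matrix m m ℝ := 1 - Q * Qᵀ with hE
  have hEsym : Eᵀ = E := by
    rw [hE, Matrix.transpose_sub, Matrix.transpose_one, Matrix.transpose_mul,
      Matrix.transpose_transpose]
  have hEE : E * E = E := by
    rw [hE, Matrix.sub_mul, Matrix.one_mul, Matrix.mul_sub, Matrix.mul_one, hproj]
    abel
  have h : fro Y - fro (Qᵀ * Y) = fro (E * Y) := by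
    rw [fro_eq_trace_s9, fro_eq_trace_s9, fro_eq_trace_s9]
    have hT : (E * Y)ᵀ * (E * Y) = Yᵀ * Y - (Qᵀ * Y)ᵀ * (Qᵀ * Y) := by
      calc (E * Y)ᵀ * (E * Y) = Yᵀ * E * (E * Y) := by rw [Matrix.transpose_mul, hEsym]
        _ = Yᵀ * (E * E * Y) := by
            rw [Matrix.mul_assoc, ← Matrix.mul_assoc E E Y]
        _ = Yᵀ * (E * Y) := by rw [hEE]
        _ = Yᵀ * Y - Yᵀ * (Q * (Qᵀ * Y)) := by
            rw [hE, Matrix.sub_mul, Matrix.one_mul, Matrix.mul_sub, Matrix.mul_assoc]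
        _ = Yᵀ * Y - (Qᵀ * Y)ᵀ * (Qᵀ * Y) := by
            rw [Matrix.transpose_mul, Matrix.transpose_transpose, Matrix.mul_assoc]
    rw [hT, Matrix.trace_sub]
  have := fro_nonneg (E * Y)
  linarith

/-- with `P = U_J U_Jᵀ` the projector onto the span of the left-singular
vectors with indices in `J` (with `|J| = i`), the regularized least-squares problem over
`W ∈ ℝ^{n×p}` for the correction term has the same optimal value as the reduced problem
over `W' ∈ ℝ^{(k-i)×p}` with data `Σ_{Jᶜ} V_{Jᶜ}ᵀ`. -/
theorem greedy_objective_reduced_formulation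
    (n k i p : ℕ) (hkn : k ≤ n)
    (S : Matrix (Fin n) (Fin k) ℝ)
    (σ : Fin k → ℝ) (u : Fin k → Fin n → ℝ) (v : Fin k → Fin k → ℝ)
    (hσ0 : ∀ j, 0 ≤ σ j)
    (hu : ∀ i' j, ∑ x, u i' x * u j x = if i' = j then (1 : ℝ) else 0)
    (hv : ∀ i' j, ∑ y, v i' y * v j y = if i' = j then (1 : ℝ) else 0)
    (hS : S = ∑ j, σ j • Matrix.vecMulVec (u j) (v j))
    (J : Finset (Fin k)) (hJcard : J.card = i)
    (UJ : Matrix (Fin n) {j : Fin k // j ∈ J} ℝ)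
    (hUJ : ∀ x (j : {j : Fin k // j ∈ J}), UJ x j = u j.val x)
    (P : Matrix (Fin n) (Fin n) ℝ)
    (hP : P = UJ * UJᵀ)
    (H : Matrix (Fin p) (Fin k) ℝ)
    (γ : ℝ) (hγ : 0 ≤ γ) :
    (⨅ W : Matrix (Fin n) (Fin p) ℝ,
        (∑ a, ∑ b, ((P * S + W * H - S) a b) ^ 2) + γ * ∑ a, ∑ b, (W a b) ^ 2)
      = ⨅ W' : Matrix {j : Fin k // j ∉ J} (Fin p) ℝ,
          (∑ a, ∑ b,
            (((Matrix.of fun (j : {j : Fin k // j ∉ J}) (c : Fin k) => σ j.val * v j.val c)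
              + W' * H) a b) ^ 2) + γ * ∑ a, ∑ b, (W' a b) ^ 2 := by
  classical
  set U' : Matrix (Fin n) {j : Fin k // j ∉ J} ℝ := Matrix.of (fun x j => u j.val x) with hU'
  set M : Matrix {j : Fin k // j ∉ J} (Fin k) ℝ :=
    Matrix.of (fun j c => σ j.val * v j.val c) with hM
  -- orthonormality of U'
  have hU'orth : U'ᵀ * U' = 1 := by
    ext j j'
    simp only [Matrix.mul_apply, Matrix.transpose_apply, hU', Matrix.of_apply]
    rw [hu j.val j'.val]
    by_cases h : j = j'
    · simp [h, Matrix.one_apply]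
    · have : ¬ (j.val = j'.val) := fun hh => h (Subtype.ext hh)
      simp [Matrix.one_apply, h, this]
  -- key structural identity: S - P*S = U' * M
  have hkey : S - P * S = U' * M := by
    have hScol : ∀ (jv : Fin k) (c : Fin k), (∑ a, u jv a * S a c) = σ jv * v jv c := by
      intro jv c
      have : ∀ a, S a c = ∑ l, σ l * (u l a * v l c) := by
        intro a
        rw [hS]
        simp [Matrix.sum_apply, Matrix.vecMulVec_apply]
      simp only [this, Finset.mul_sum]
      rw [Finset.sum_comm]
      have : ∀ l, (∑ a, u jv a * (σ l * (u l a * v l c)))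
          = σ l * v l c * ∑ a, u jv a * u l a := by
        intro l
        rw [Finset.mul_sum]
        apply Finset.sum_congr rfl
        intro a _
        ring
      simp only [this, hu]
      rw [Finset.sum_eq_single jv]
      · simp
      · intro b _ hb
        simp [Ne.symm hb]
      · simp
    ext x c
    have hPS : (P * S) x c = ∑ j ∈ J, σ j * (u j x * v j c) := by
      rw [hP, Matrix.mul_assoc, Matrix.mul_apply]
      have hcol : ∀ (j : {j : Fin k // j ∈ J}), (UJᵀ * S) j c = σ j.val * v j.val c := by
        intro j
        rw [Matrix.mul_apply]
        simp only [Matrix.transpose_apply, hUJ]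
        exact hScol j.val c
      have : ∑ j, UJ x j * (UJᵀ * S) j c
          = ∑ j : {j : Fin k // j ∈ J}, σ j.val * (u j.val x * v j.val c) := by
        apply Finset.sum_congr rfl
        intro j _
        rw [hcol, hUJ]
        ring
      rw [this, ← Finset.sum_subtype J (fun j => Iff.rfl) (fun j => σ j * (u j x * v j c))]
    have hUM : (U' * M) x c = ∑ j ∈ Jᶜ, σ j * (u j x * v j c) := by
      rw [Matrix.mul_apply]
      have : ∀ (j : {j : Fin k // j ∉ J}), U' x j * M j c = σ j.val * (u j.val x * v j.val c) := by
        intro j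
        simp only [hU', hM, Matrix.of_apply]
        ring
      simp only [this]
      rw [← Finset.sum_subtype Jᶜ (fun j => Finset.mem_compl) (fun j => σ j * (u j x * v j c))]
    have hSe : S x c = ∑ j, σ j * (u j x * v j c) := by
      rw [hS]
      simp [Matrix.sum_apply, Matrix.vecMulVec_apply]
    have hsplit := Finset.sum_add_sum_compl J (fun j => σ j * (u j x * v j c))
    have : (S - P * S) x c = S x c - (P * S) x c := rfl
    rw [this, hSe, hPS, hUM]
    linarith
  -- objectives as fro
  have hbdd1 : BddBelow (Set.range fun W : Matrix (Fin n) (Fin p) ℝ =>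
      (∑ a, ∑ b, ((P * S + W * H - S) a b) ^ 2) + γ * ∑ a, ∑ b, (W a b) ^ 2) := by
    refine ⟨0, ?_⟩
    rintro x ⟨W, rfl⟩
    dsimp only
    have h1 : (0:ℝ) ≤ ∑ a, ∑ b, ((P * S + W * H - S) a b) ^ 2 := by positivity
    have h2 : (0:ℝ) ≤ ∑ a, ∑ b, (W a b) ^ 2 := by positivity
    have := mul_nonneg hγ h2
    linarith
  have hbdd2 : BddBelow (Set.range fun W' : Matrix {j : Fin k // j ∉ J} (Fin p) ℝ =>
      (∑ a, ∑ b, ((M + W' * H) a b) ^ 2) + γ * ∑ a, ∑ b, (W' a b) ^ 2) := by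
    refine ⟨0, ?_⟩
    rintro x ⟨W', rfl⟩
    dsimp only
    have h1 : (0:ℝ) ≤ ∑ a, ∑ b, ((M + W' * H) a b) ^ 2 := by positivity
    have h2 : (0:ℝ) ≤ ∑ a, ∑ b, (W' a b) ^ 2 := by positivity
    have := mul_nonneg hγ h2
    linarith
  apply le_antisymm
  · apply le_ciInf
    intro W'
    refine (ciInf_le hbdd1 (-(U' * W'))).trans_eq ?_
    have e1 : P * S + (-(U' * W')) * H - S = -(U' * (M + W' * H)) := by
      have : P * S - S = -(U' * M) := by
        rw [← hkey]; abel
      rw [Matrix.mul_add]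
      rw [Matrix.neg_mul, Matrix.mul_assoc]
      calc P * S + -(U' * (W' * H)) - S = (P * S - S) + -(U' * (W' * H)) := by abel
        _ = -(U' * M) + -(U' * (W' * H)) := by rw [this]
        _ = -(U' * M + U' * (W' * H)) := by abel
    show fro (P * S + (-(U' * W')) * H - S) + γ * fro (-(U' * W'))
        = fro (M + W' * H) + γ * fro W'
    rw [e1, fro_neg, fro_neg, fro_mul_isometry U' hU'orth, fro_mul_isometry U' hU'orth]
  · apply le_ciInf
    intro W
    refine (ciInf_le hbdd2 (-(U'ᵀ * W))).trans ?_
    show fro (M + (-(U'ᵀ * W)) * H) + γ * fro (-(U'ᵀ * W))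
        ≤ fro (P * S + W * H - S) + γ * fro W
    have e1 : P * S + W * H - S = W * H - U' * M := by
      rw [← hkey]; abel
    have e2 : M + (-(U'ᵀ * W)) * H = -(U'ᵀ * (W * H - U' * M)) := by
      rw [Matrix.mul_sub, ← Matrix.mul_assoc U'ᵀ U' M, hU'orth, Matrix.one_mul,
        Matrix.neg_mul, Matrix.mul_assoc]
      abel
    rw [e1, e2, fro_neg, fro_neg]
    have h1 := fro_transpose_mul_le U' hU'orth (W * H - U' * M)
    have h2 := fro_transpose_mul_le U' hU'orth W
    nlinarith
end
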